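/- Let D be a doubly-even semi self-dual binary code of length n. Then there exists a self-dual code F with D ⊊ F = F⊥ ⊊ D⊥ such that F is not doubly-even and D = F₀ := {f ∈ F : wt(f) ≡ 0 (mod 4)} is the maximal doubly-even subcode of F. -/

import Mathlib

/-- The Hamming weight of a word in `(ZMod 2)^n`. -/
def wt {n : ℕ} (c : Fin n → ZMod 2) : ℕ :=
  (Finset.univ.filter fun i => c i ≠ 0).card

/-- The dual code of a binary linear code. -/
def dualCode {n : ℕ} (D : Submodule (ZMod 2) (Fin n → ZMod 2)) :
    Submodule (ZMod 2) (Fin n → ZMod 2) where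
  carrier := {v | ∀ c ∈ D, ∑ i, v i * c i = 0}
  zero_mem' := by intro c hc; simp
  add_mem' := by
    intro a b ha hb c hc
    simp [add_mul, Finset.sum_add_distrib, ha c hc, hb c hc]
  smul_mem' := by
    intro r a ha c hc
    simp [mul_assoc, ← Finset.mul_sum, ha c hc]

/-- A semi self-dual code: self-orthogonal, contains the all-ones vector,
and has codimension 2 in its dual. -/
def IsSemiSelfDual {n : ℕ} (D : Submodule (ZMod 2) (Fin n → ZMod 2)) : Prop :=
  D ≤ dualCode D ∧ (fun _ => 1 : Fin n → ZMod 2) ∈ D ∧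
    Module.finrank (ZMod 2) (dualCode D) = Module.finrank (ZMod 2) D + 2

/-- The minimum distance: minimum weight of a nonzero codeword. -/
noncomputable def minDist {n : ℕ} (C : Submodule (ZMod 2) (Fin n → ZMod 2)) : ℕ :=
  sInf {k | ∃ c ∈ C, c ≠ 0 ∧ wt c = k}

/-- Doubly-even codes. -/
def IsDoublyEven {n : ℕ} (D : Submodule (ZMod 2) (Fin n → ZMod 2)) : Prop :=
  ∀ c ∈ D, wt c % 4 = 0

noncomputable def stdB (n : ℕ) : LinearMap.BilinForm (ZMod 2) (Fin n → ZMod 2) :=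
  LinearMap.mk₂ (ZMod 2) (fun u v => ∑ i, u i * v i)
    (fun a b v => by simp [add_mul, Finset.sum_add_distrib])
    (fun r a v => by simp [mul_assoc, Finset.mul_sum])
    (fun u a b => by simp [mul_add, Finset.sum_add_distrib])
    (fun r u v => by simp [Finset.mul_sum, mul_left_comm])


lemma stdB_apply {n : ℕ} (u v : Fin n → ZMod 2) : stdB n u v = ∑ i, u i * v i := rfl


lemma stdB_symm (n : ℕ) : (stdB n).IsSymm := ⟨fun u v => by
  simp [stdB_apply, mul_comm]⟩


lemma stdB_nondeg (n : ℕ) : (stdB n).Nondegenerate := by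
  constructor
  · intro u h
    funext i
    have := h (Pi.single i 1)
    simpa [stdB_apply, Pi.single_apply, mul_ite, Finset.sum_ite_eq'] using this
  · intro u h
    funext i
    have := h (Pi.single i 1)
    simpa [stdB_apply, Pi.single_apply, ite_mul, Finset.sum_ite_eq] using this


lemma wt_eq_sum_val {n : ℕ} (c : Fin n → ZMod 2) : wt c = ∑ i, (c i).val := by
  rw [wt, Finset.card_filter]
  have h : ∀ a : ZMod 2, (if a ≠ 0 then 1 else 0) = a.val := by decide
  exact Finset.sum_congr rfl fun i _ => h (c i)


lemma cast_sum_val {n : ℕ} (c : Fin n → ZMod 2) :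
    ((∑ i, (c i).val : ℕ) : ZMod 2) = ∑ i, c i := by
  push_cast
  have h : ∀ a : ZMod 2, ((a.val : ℕ) : ZMod 2) = a := by decide
  exact Finset.sum_congr rfl fun i _ => h (c i)


lemma ip_cast {n : ℕ} (u v : Fin n → ZMod 2) :
    ((∑ i, (u i).val * (v i).val : ℕ) : ZMod 2) = ∑ i, u i * v i := by
  push_cast
  have h : ∀ a b : ZMod 2, ((a.val : ℕ) : ZMod 2) * ((b.val : ℕ) : ZMod 2) = a * b := by decide
  exact Finset.sum_congr rfl fun i _ => h (u i) (v i)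


lemma wt_add_eq {n : ℕ} (u v : Fin n → ZMod 2) :
    wt (u + v) + 2 * ∑ i, (u i).val * (v i).val = wt u + wt v := by
  rw [wt_eq_sum_val, wt_eq_sum_val, wt_eq_sum_val]
  rw [Finset.mul_sum, ← Finset.sum_add_distrib, ← Finset.sum_add_distrib]
  refine Finset.sum_congr rfl fun i _ => ?_
  have h : ∀ a b : ZMod 2, (a + b).val + 2 * (a.val * b.val) = a.val + b.val := by decide
  exact h (u i) (v i)

-- parity facts


lemma natCast_zmod2_eq_zero_iff (N : ℕ) : (N : ZMod 2) = 0 ↔ N % 2 = 0 := by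
  rw [ZMod.natCast_eq_zero_iff, Nat.dvd_iff_mod_eq_zero]


lemma natCast_zmod2_eq_one_iff (N : ℕ) : (N : ZMod 2) = 1 ↔ N % 2 = 1 := by
  constructor
  · intro h
    rcases Nat.mod_two_eq_zero_or_one N with h2 | h2
    · exact absurd h (by rw [(natCast_zmod2_eq_zero_iff N).2 h2]; decide)
    · exact h2
  · intro h
    calc (N : ZMod 2) = ((N % 2 : ℕ) : ZMod 2) := (ZMod.natCast_mod N 2).symm
    _ = 1 := by rw [h]; rfl


lemma mem_dualCode {n : ℕ} {D : Submodule (ZMod 2) (Fin n → ZMod 2)}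
    {v : Fin n → ZMod 2} : v ∈ dualCode D ↔ ∀ c ∈ D, ∑ i, v i * c i = 0 := Iff.rfl


lemma dualCode_eq_orthogonal {n : ℕ} (D : Submodule (ZMod 2) (Fin n → ZMod 2)) :
    dualCode D = (stdB n).orthogonal D := by
  ext v
  rw [mem_dualCode, LinearMap.BilinForm.mem_orthogonal_iff]
  constructor
  · intro h c hc
    rw [stdB_apply]
    rw [← h c hc]
    exact Finset.sum_congr rfl fun i _ => mul_comm _ _
  · intro h c hc
    have := h c hc
    rw [stdB_apply] at this
    rw [← this]
    exact Finset.sum_congr rfl fun i _ => mul_comm _ _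


lemma finrank_dualCode {n : ℕ} (D : Submodule (ZMod 2) (Fin n → ZMod 2)) :
    Module.finrank (ZMod 2) (dualCode D) = n - Module.finrank (ZMod 2) D := by
  rw [dualCode_eq_orthogonal,
    LinearMap.BilinForm.finrank_orthogonal (stdB_nondeg n),
    Module.finrank_pi, Fintype.card_fin]


lemma dualCode_dualCode {n : ℕ} (D : Submodule (ZMod 2) (Fin n → ZMod 2)) :
    dualCode (dualCode D) = D := by
  rw [dualCode_eq_orthogonal, dualCode_eq_orthogonal,
    LinearMap.BilinForm.orthogonal_orthogonal (stdB_nondeg n) (stdB_symm n).isRefl]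


lemma key_construction {n : ℕ} (D : Submodule (ZMod 2) (Fin n → ZMod 2))
    (hDle : D ≤ dualCode D)
    (heven : ∀ w ∈ dualCode D, wt w % 2 = 0)
    (hde : IsDoublyEven D)
    (x y : Fin n → ZMod 2)
    (hx : x ∈ dualCode D) (hxD : x ∉ D) (hy : y ∈ dualCode D)
    (hwx : wt x % 4 = 2)
    (hxy : ∑ i, x i * y i = 1)
    (hsup : D ⊔ Submodule.span (ZMod 2) {x} ⊔ Submodule.span (ZMod 2) {y} = dualCode D) :
    ∃ F : Submodule (ZMod 2) (Fin n → ZMod 2),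
      D < F ∧ F = dualCode F ∧ F < dualCode D ∧ ¬ IsDoublyEven F ∧
      ∀ f : Fin n → ZMod 2, f ∈ D ↔ f ∈ F ∧ wt f % 4 = 0 := by
  classical
  set F := D ⊔ Submodule.span (ZMod 2) {x} with hF
  have hsq : ∀ a : ZMod 2, a * a = a := by decide
  have hzo : ∀ a : ZMod 2, a = 0 ∨ a = 1 := by decide
  have hxF : x ∈ F := Submodule.mem_sup_right (Submodule.mem_span_singleton_self x)
  have hDF : D ≤ F := le_sup_left
  have memF : ∀ f, f ∈ F ↔ (f ∈ D ∨ ∃ d ∈ D, f = d + x) := by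
    intro f
    constructor
    · intro hf
      rcases Submodule.mem_sup.1 hf with ⟨d, hd, s, hs, rfl⟩
      rcases Submodule.mem_span_singleton.1 hs with ⟨c, rfl⟩
      rcases hzo c with rfl | rfl
      · left; simpa using hd
      · right; exact ⟨d, hd, by simp⟩
    · rintro (hf | ⟨d, hd, rfl⟩)
      · exact hDF hf
      · exact add_mem (hDF hd) hxF
  have hxx : ∑ i, x i * x i = 0 := by
    have h1 : ∑ i, x i * x i = ∑ i, x i := Finset.sum_congr rfl fun i _ => hsq (x i)
    rw [h1, ← cast_sum_val, ← wt_eq_sum_val]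
    exact (natCast_zmod2_eq_zero_iff _).2 (heven x hx)
  have hD2 : ∀ d ∈ D, ∀ e ∈ dualCode D, ∑ i, d i * e i = 0 := by
    intro d hd e he
    rw [← he d hd]
    exact Finset.sum_congr rfl fun i _ => mul_comm _ _
  have orth : ∀ a ∈ F, ∀ b ∈ F, ∑ i, a i * b i = 0 := by
    intro a ha b hb
    rcases (memF a).1 ha with haD | ⟨d, hd, rfl⟩ <;>
      rcases (memF b).1 hb with hbD | ⟨e, he, rfl⟩
    · exact (hDle haD) b hbD
    · have h1 := (hDle haD) e he
      have h2 := hD2 a haD x hx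
      simp [mul_add, Finset.sum_add_distrib, h1, h2]
    · have h1 := (hDle hd) b hbD
      have h2 := hx b hbD
      simp [add_mul, Finset.sum_add_distrib, h1, h2]
    · have h1 := (hDle hd) e he
      have h2 := hx e he
      have h3 := hD2 d hd x hx
      simp [add_mul, mul_add, Finset.sum_add_distrib, h1, h2, h3, hxx]
  have hFsd : F = dualCode F := by
    apply le_antisymm
    · intro f hf c hc
      exact orth f hf c hc
    · intro w hw
      have hwD : w ∈ dualCode D := fun c hc => hw c (hDF hc)
      rw [← hsup] at hwD
      rcases Submodule.mem_sup.1 hwD with ⟨f, hf, s, hs, rfl⟩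
      rcases Submodule.mem_span_singleton.1 hs with ⟨c, rfl⟩
      rcases hzo c with rfl | rfl
      · simpa using hf
      · exfalso
        have h1 : ∑ i, (f + (1:ZMod 2) • y) i * x i = 0 := hw x hxF
        have h2 : ∑ i, f i * x i = 0 := orth f hf x hxF
        have h3 : ∑ i, y i * x i = 1 := by
          rw [← hxy]; exact Finset.sum_congr rfl fun i _ => mul_comm _ _
        rw [one_smul] at h1
        rw [show ∑ i, (f + y) i * x i = (∑ i, f i * x i) + ∑ i, y i * x i by
          rw [← Finset.sum_add_distrib]
          exact Finset.sum_congr rfl fun i _ => by simp [add_mul]] at h1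
        rw [h2, h3, zero_add] at h1
        exact one_ne_zero h1
  have hFlt : F < dualCode D := by
    rw [SetLike.lt_iff_le_and_exists]
    refine ⟨sup_le hDle (Submodule.span_le.2 (Set.singleton_subset_iff.2 hx)), y, hy, ?_⟩
    intro hyF
    have := orth x hxF y hyF
    rw [hxy] at this
    exact one_ne_zero this
  have hDltF : D < F := by
    rw [SetLike.lt_iff_le_and_exists]
    exact ⟨hDF, x, hxF, hxD⟩
  have hnotde : ¬ IsDoublyEven F := by
    intro h
    have := h x hxF
    omega
  refine ⟨F, hDltF, hFsd, hFlt, hnotde, fun f => ⟨fun hf => ⟨hDF hf, hde f hf⟩, ?_⟩⟩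
  rintro ⟨hfF, h4⟩
  rcases (memF f).1 hfF with hfD | ⟨d, hd, rfl⟩
  · exact hfD
  · exfalso
    have hA := wt_add_eq d x
    have hdw := hde d hd
    have hpar : (∑ i, (d i).val * (x i).val) % 2 = 0 := by
      have h0 : ∑ i, d i * x i = 0 := hD2 d hd x hx
      have hc := ip_cast d x
      rw [h0] at hc
      exact (natCast_zmod2_eq_zero_iff _).1 hc
    omega


/-- A doubly-even semi self-dual code `D` is the maximal doubly-even subcode of
some self-dual code `F` which is not doubly-even, with `D ⊊ F = F⊥ ⊊ D⊥`. -/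
theorem exists_self_dual_with_doubly_even_subcode
    {n : ℕ} (D : Submodule (ZMod 2) (Fin n → ZMod 2))
    (hD : IsSemiSelfDual D) (hde : IsDoublyEven D) :
    ∃ F : Submodule (ZMod 2) (Fin n → ZMod 2),
      D < F ∧ F = dualCode F ∧ F < dualCode D ∧ ¬ IsDoublyEven F ∧
      ∀ f : Fin n → ZMod 2, f ∈ D ↔ f ∈ F ∧ wt f % 4 = 0 := by
  classical
  obtain ⟨hDle, hone, hrank⟩ := hD
  have heven : ∀ w ∈ dualCode D, wt w % 2 = 0 := by
    intro w hw
    have h0 := hw _ hone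
    have h0' : ∑ i, w i = 0 := by simpa using h0
    have hc : ((wt w : ℕ) : ZMod 2) = 0 := by rw [wt_eq_sum_val, cast_sum_val]; exact h0'
    exact (natCast_zmod2_eq_zero_iff _).1 hc
  have hsq : ∀ a : ZMod 2, a * a = a := by decide
  have hzo : ∀ a : ZMod 2, a ≠ 1 → a = 0 := by decide
  have haddself : ∀ a : ZMod 2, a + a = 0 := by decide
  have addself : ∀ w : Fin n → ZMod 2, w + w = 0 := fun w => funext fun i => haddself (w i)
  have ipself : ∀ w ∈ dualCode D, ∑ i, w i * w i = 0 := by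
    intro w hw
    have h1 : ∑ i, w i * w i = ∑ i, w i := Finset.sum_congr rfl fun i _ => hsq (w i)
    rw [h1, ← cast_sum_val, ← wt_eq_sum_val]
    exact (natCast_zmod2_eq_zero_iff _).2 (heven w hw)
  have ip_comm : ∀ a b : Fin n → ZMod 2, ∑ i, a i * b i = ∑ i, b i * a i := fun a b =>
    Finset.sum_congr rfl fun i _ => mul_comm _ _
  have hDlt : D < dualCode D := lt_of_le_of_ne hDle (by
    intro h
    rw [← h] at hrank
    omega)
  obtain ⟨u, hu, huD⟩ := SetLike.exists_of_lt hDlt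
  have hu0 : u ≠ 0 := fun h => huD (h ▸ zero_mem D)
  have hAle : D ⊔ Submodule.span (ZMod 2) {u} ≤ dualCode D :=
    sup_le hDle (Submodule.span_le.2 (Set.singleton_subset_iff.2 hu))
  have hAfr : Module.finrank (ZMod 2) (D ⊔ Submodule.span (ZMod 2) {u} :
      Submodule (ZMod 2) (Fin n → ZMod 2)) ≤ Module.finrank (ZMod 2) D + 1 := by
    have h1 := Submodule.finrank_sup_add_finrank_inf_eq D (Submodule.span (ZMod 2) {u})
    have h2 : Module.finrank (ZMod 2) (Submodule.span (ZMod 2) {u}) = 1 :=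
      finrank_span_singleton hu0
    omega
  have hAlt : D ⊔ Submodule.span (ZMod 2) {u} < dualCode D := lt_of_le_of_ne hAle (by
    intro h
    rw [← h] at hrank
    omega)
  obtain ⟨v, hv, hvA⟩ := SetLike.exists_of_lt hAlt
  have hvD : v ∉ D := fun h => hvA (Submodule.mem_sup_left h)
  have hBle : D ⊔ Submodule.span (ZMod 2) {u} ⊔ Submodule.span (ZMod 2) {v} ≤ dualCode D :=
    sup_le hAle (Submodule.span_le.2 (Set.singleton_subset_iff.2 hv))
  have hsup : D ⊔ Submodule.span (ZMod 2) {u} ⊔ Submodule.span (ZMod 2) {v} = dualCode D := by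
    apply Submodule.eq_of_le_of_finrank_le hBle
    have hDA : D < D ⊔ Submodule.span (ZMod 2) {u} := by
      rw [SetLike.lt_iff_le_and_exists]
      exact ⟨le_sup_left, u, Submodule.mem_sup_right (Submodule.mem_span_singleton_self u), huD⟩
    have hAB : D ⊔ Submodule.span (ZMod 2) {u} <
        D ⊔ Submodule.span (ZMod 2) {u} ⊔ Submodule.span (ZMod 2) {v} := by
      rw [SetLike.lt_iff_le_and_exists]
      exact ⟨le_sup_left, v, Submodule.mem_sup_right (Submodule.mem_span_singleton_self v), hvA⟩
    have f1 := Submodule.finrank_lt_finrank_of_lt hDA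
    have f2 := Submodule.finrank_lt_finrank_of_lt hAB
    omega
  have huv : ∑ i, u i * v i = 1 := by
    by_contra hne
    have h0 : ∑ i, u i * v i = 0 := hzo _ hne
    have hmem : u ∈ dualCode (dualCode D) := by
      intro w hw
      rw [← hsup] at hw
      rcases Submodule.mem_sup.1 hw with ⟨s, hs, t, ht, rfl⟩
      rcases Submodule.mem_sup.1 hs with ⟨d, hd, s', hs', rfl⟩
      rcases Submodule.mem_span_singleton.1 hs' with ⟨c1, rfl⟩
      rcases Submodule.mem_span_singleton.1 ht with ⟨c2, rfl⟩
      have e1 : ∑ i, u i * d i = 0 := hu d hd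
      have e2 : ∑ i, u i * u i = 0 := ipself u hu
      have expand : ∑ i, u i * (d + c1 • u + c2 • v) i
          = (∑ i, u i * d i) + c1 * (∑ i, u i * u i) + c2 * (∑ i, u i * v i) := by
        rw [Finset.mul_sum, Finset.mul_sum, ← Finset.sum_add_distrib, ← Finset.sum_add_distrib]
        refine Finset.sum_congr rfl fun i _ => ?_
        simp only [Pi.add_apply, Pi.smul_apply, smul_eq_mul]
        ring
      rw [expand, e1, e2, h0]
      simp
    rw [dualCode_dualCode] at hmem
    exact huD hmem
  have hwu2 := heven u hu
  have hwv2 := heven v hv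
  by_cases hcu : wt u % 4 = 2
  · exact key_construction D hDle heven hde u v hu huD hv hcu huv hsup
  · by_cases hcv : wt v % 4 = 2
    · refine key_construction D hDle heven hde v u hv hvD hu hcv (by rw [ip_comm]; exact huv) ?_
      rw [sup_right_comm]
      exact hsup
    · have hu4 : wt u % 4 = 0 := by omega
      have hv4 : wt v % 4 = 0 := by omega
      have hxdual : u + v ∈ dualCode D := add_mem hu hv
      have hcancel : u + (u + v) = v := by rw [← add_assoc, addself, zero_add]
      have hxD : u + v ∉ D := by
        intro h
        apply hvA
        rw [← hcancel]
        exact add_mem (Submodule.mem_sup_right (Submodule.mem_span_singleton_self u))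
          (Submodule.mem_sup_left h)
      have hipxu : ∑ i, (u + v) i * u i = 1 := by
        have hsplit : ∑ i, (u + v) i * u i = (∑ i, u i * u i) + ∑ i, v i * u i := by
          rw [← Finset.sum_add_distrib]
          exact Finset.sum_congr rfl fun i _ => by simp [add_mul]
        rw [hsplit, ipself u hu, ip_comm v u, huv, zero_add]
      have hwx2 : wt (u + v) % 4 = 2 := by
        have hA := wt_add_eq u v
        have hpar : (∑ i, (u i).val * (v i).val) % 2 = 1 := by
          have hc := ip_cast u v
          rw [huv] at hc
          exact (natCast_zmod2_eq_one_iff _).1 hc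
        omega
      refine key_construction D hDle heven hde (u + v) u hxdual hxD hu hwx2 hipxu ?_
      apply le_antisymm
      · exact sup_le (sup_le hDle (Submodule.span_le.2 (Set.singleton_subset_iff.2 hxdual)))
          (Submodule.span_le.2 (Set.singleton_subset_iff.2 hu))
      · rw [← hsup]
        refine sup_le (sup_le ?_ ?_) ?_
        · exact le_trans le_sup_left le_sup_left
        · refine Submodule.span_le.2 (Set.singleton_subset_iff.2 ?_)
          exact Submodule.mem_sup_right (Submodule.mem_span_singleton_self u)
        · refine Submodule.span_le.2 (Set.singleton_subset_iff.2 ?_)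
          have hm : u + (u + v) ∈ D ⊔ Submodule.span (ZMod 2) {u + v} ⊔
              Submodule.span (ZMod 2) {u} :=
            add_mem (Submodule.mem_sup_right (Submodule.mem_span_singleton_self u))
              (Submodule.mem_sup_left
                (Submodule.mem_sup_right (Submodule.mem_span_singleton_self (u + v))))
          rwa [hcancel] at hm
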